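/- (Infinity-norm nonexpansion) Let A = (a_{ij}) be a symmetric n×n real matrix with nonnegative entries, let ω ∈ ℝ^n, and let θ* ∈ ℝ^n be an equilibrium of the Kuramoto dynamics. Let γ ∈ (0, π/2] and suppose |θ*_i − θ*_j| ≤ π/2 − γ whenever a_{ij} > 0. Let θ : [0, ∞) → ℝ^n be a differentiable solution of the Kuramoto dynamics, i.e. θ̇_i(t) = ω_i + Σ_j a_{ij} sin(θ_j(t) − θ_i(t)) for all i and t ≥ 0, with max_k |θ_k(0) − θ*_k| < γ. Then the function t ↦ max_k |θ_k(t) − θ*_k| is nonincreasing on [0, ∞); in particular the open infinity-ball of radius γ around θ* is forward-invariant. -/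

import Mathlib

open Real Set Filter
open scoped Topology

private lemma kuramoto_sin_add_le_sin {γ δ u : ℝ} (hγ0 : 0 < γ) (hγ2 : γ ≤ Real.pi / 2)
    (hδ : |δ| ≤ Real.pi / 2 - γ) (hu1 : -(2 * γ) ≤ u) (hu2 : u ≤ 0) :
    Real.sin (δ + u) ≤ Real.sin δ := by
  have habs := abs_le.1 hδ
  have hπ := Real.pi_pos
  have h1 : Real.sin (δ + u) - Real.sin δ
      = 2 * Real.sin (u / 2) * Real.cos (δ + u / 2) := by
    have := Real.sin_sub_sin (δ + u) δ
    rw [show (δ + u - δ) / 2 = u / 2 by ring, show (δ + u + δ) / 2 = δ + u / 2 by ring] at this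
    exact this
  have hs : Real.sin (u / 2) ≤ 0 :=
    Real.sin_nonpos_of_nonpos_of_neg_pi_le (by linarith) (by linarith)
  have hc : 0 ≤ Real.cos (δ + u / 2) :=
    Real.cos_nonneg_of_mem_Icc ⟨by linarith [habs.1], by linarith [habs.2]⟩
  have h2 : 2 * Real.sin (u / 2) * Real.cos (δ + u / 2) ≤ 0 := by
    have := mul_nonneg (neg_nonneg.2 hs) hc
    nlinarith
  linarith

private lemma kuramoto_sin_le_sin_add {γ δ u : ℝ} (hγ0 : 0 < γ) (hγ2 : γ ≤ Real.pi / 2)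
    (hδ : |δ| ≤ Real.pi / 2 - γ) (hu1 : 0 ≤ u) (hu2 : u ≤ 2 * γ) :
    Real.sin δ ≤ Real.sin (δ + u) := by
  have := kuramoto_sin_add_le_sin (δ := -δ) (u := -u) hγ0 hγ2 (by rwa [abs_neg])
    (by linarith) (by linarith)
  rw [← neg_add, Real.sin_neg, Real.sin_neg] at this
  linarith

/-- Infinity-norm nonexpansion: let `θ*` be an equilibrium of the Kuramoto
dynamics with symmetric nonnegative weights and `|θ*_i - θ*_j| ≤ π/2 - γ` on all edges for
some `γ ∈ (0, π/2]`. Then along any differentiable solution starting in the open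
infinity-ball of radius `γ` around `θ*`, the function `t ↦ max_k |θ_k(t) - θ*_k|` is
nonincreasing on `[0, ∞)`; in particular, the ball is forward-invariant. -/
theorem infinity_norm_nonexpansion (n : ℕ)
    (A : Matrix (Fin n) (Fin n) ℝ) (hsymm : A.IsSymm) (hnonneg : ∀ i j, 0 ≤ A i j)
    (ω θs : Fin n → ℝ)
    (heq : ∀ i, ω i + ∑ j, A i j * Real.sin (θs j - θs i) = 0)
    (γ : ℝ) (hγ0 : 0 < γ) (hγ2 : γ ≤ Real.pi / 2)
    (hcoh : ∀ i j, 0 < A i j → |θs i - θs j| ≤ Real.pi / 2 - γ)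
    (θ : ℝ → Fin n → ℝ)
    (hsol : ∀ t ∈ Set.Ici (0 : ℝ), ∀ i,
      HasDerivAt (fun s => θ s i) (ω i + ∑ j, A i j * Real.sin (θ t j - θ t i)) t)
    (hinit : ∀ k, |θ 0 k - θs k| < γ) :
    AntitoneOn (fun t => ⨆ k, |θ t k - θs k|) (Set.Ici (0 : ℝ)) ∧
    ∀ t ∈ Set.Ici (0 : ℝ), ∀ k, |θ t k - θs k| < γ := by
  rcases Nat.eq_zero_or_pos n with hn | hn
  · subst hn
    constructor
    · intro a _ b _ _
      simp [Real.iSup_of_isEmpty]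
    · intro t _ k
      exact k.elim0
  haveI : Nonempty (Fin n) := ⟨⟨0, hn⟩⟩
  set m : ℝ → ℝ := fun t => ⨆ k, |θ t k - θs k| with hmdef
  have hle : ∀ t k, |θ t k - θs k| ≤ m t := by
    intro t k
    show |θ t k - θs k| ≤ ⨆ k, |θ t k - θs k|
    exact le_ciSup (f := fun k => |θ t k - θs k|)
      (Set.Finite.bddAbove (Set.finite_range _)) k
  have hsup_le : ∀ t (c : ℝ), (∀ k, |θ t k - θs k| ≤ c) → m t ≤ c := by
    intro t c h
    show (⨆ k, |θ t k - θs k|) ≤ c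
    exact ciSup_le h
  have hm_nonneg : ∀ t, 0 ≤ m t := fun t => le_trans (abs_nonneg _) (hle t ⟨0, hn⟩)
  -- continuity of m on [0, ∞)
  have hfun : m = fun a => Finset.univ.sup' Finset.univ_nonempty (fun k => |θ a k - θs k|) := by
    funext a
    exact (Finset.sup'_univ_eq_ciSup _).symm
  have hcontm : ∀ t ∈ Ici (0 : ℝ), ContinuousAt m t := by
    intro t ht
    rw [hfun]
    exact Filter.Tendsto.finset_sup'_nhds_apply Finset.univ_nonempty
      (fun k _ => (((hsol t ht k).continuousAt).sub continuousAt_const).abs)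
  -- key derivative sign at max indices
  have keymax : ∀ t, 0 ≤ t → m t ≤ γ → ∀ k, θ t k - θs k = m t →
      ω k + ∑ j, A k j * Real.sin (θ t j - θ t k) ≤ 0 := by
    intro t ht hmγ k hk
    have hsum : ∑ j, A k j * Real.sin (θ t j - θ t k)
        ≤ ∑ j, A k j * Real.sin (θs j - θs k) := by
      apply Finset.sum_le_sum
      intro j _
      rcases eq_or_lt_of_le (hnonneg k j) with h | h
      · rw [← h]; simp
      · apply mul_le_mul_of_nonneg_left _ h.le
        have hδ : |θs j - θs k| ≤ Real.pi / 2 - γ := by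
          rw [abs_sub_comm]; exact hcoh k j h
        have hju : θ t j - θ t k
            = (θs j - θs k) + ((θ t j - θs j) - (θ t k - θs k)) := by ring
        rw [hju]
        have h1 := (abs_le.1 (hle t j)).1
        have h2 := (abs_le.1 (hle t j)).2
        exact kuramoto_sin_add_le_sin hγ0 hγ2 hδ (by linarith) (by linarith)
    linarith [heq k]
  have keymin : ∀ t, 0 ≤ t → m t ≤ γ → ∀ k, θ t k - θs k = -(m t) →
      0 ≤ ω k + ∑ j, A k j * Real.sin (θ t j - θ t k) := by
    intro t ht hmγ k hk
    have hsum : ∑ j, A k j * Real.sin (θs j - θs k)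
        ≤ ∑ j, A k j * Real.sin (θ t j - θ t k) := by
      apply Finset.sum_le_sum
      intro j _
      rcases eq_or_lt_of_le (hnonneg k j) with h | h
      · rw [← h]; simp
      · apply mul_le_mul_of_nonneg_left _ h.le
        have hδ : |θs j - θs k| ≤ Real.pi / 2 - γ := by
          rw [abs_sub_comm]; exact hcoh k j h
        have hju : θ t j - θ t k
            = (θs j - θs k) + ((θ t j - θs j) - (θ t k - θs k)) := by ring
        rw [hju]
        have h1 := (abs_le.1 (hle t j)).1
        have h2 := (abs_le.1 (hle t j)).2
        exact kuramoto_sin_le_sin_add hγ0 hγ2 hδ (by linarith) (by linarith)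
    linarith [heq k]
  -- uniform bound on the vector field
  set C0 : ℝ := Finset.univ.sup' Finset.univ_nonempty
    (fun k => |ω k| + ∑ j, A k j) with hC0def
  have hC0 : ∀ t, 0 ≤ t → ∀ k,
      |ω k + ∑ j, A k j * Real.sin (θ t j - θ t k)| ≤ C0 := by
    intro t ht k
    have h1 : |ω k + ∑ j, A k j * Real.sin (θ t j - θ t k)| ≤ |ω k| + ∑ j, A k j := by
      refine (abs_add_le _ _).trans (add_le_add_right ?_ _)
      refine (Finset.abs_sum_le_sum_abs _ _).trans ?_
      apply Finset.sum_le_sum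
      intro j _
      rw [abs_mul, abs_of_nonneg (hnonneg k j)]
      exact mul_le_of_le_one_right (hnonneg k j) (Real.abs_sin_le_one _)
    refine h1.trans ?_
    rw [hC0def]
    exact Finset.le_sup' (fun k => |ω k| + ∑ j, A k j) (Finset.mem_univ k)
  -- abstract slope bound
  have slope_bound : ∀ x (c : ℝ),
      (∀ k, ∀ᶠ z in 𝓝[>] x, |θ z k - θs k| ≤ m x + c * (z - x)) →
      ∀ᶠ z in 𝓝[>] x, slope m x z ≤ c := by
    intro x c h
    filter_upwards [eventually_all.2 h, self_mem_nhdsWithin] with z hz hz'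
    have hzx : x < z := hz'
    have hmz : m z ≤ m x + c * (z - x) := hsup_le z _ hz
    rw [slope_def_field, div_le_iff₀ (by linarith)]
    linarith
  -- a helper: value displacement via slope
  have hdisp : ∀ (k : Fin n) (x z : ℝ), x < z →
      θ z k = θ x k + slope (fun s => θ s k) x z * (z - x) := by
    intro k x z hxz
    rw [slope_def_field, div_mul_cancel₀ _ (sub_ne_zero.2 (ne_of_gt hxz))]
    ring
  -- the Dini derivative condition where m < γ
  have dini : ∀ x, 0 ≤ x → m x < γ → ∀ r : ℝ, 0 < r →
      ∀ᶠ z in 𝓝[>] x, slope m x z < r := by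
    intro x hx hmx r hr
    have hev : ∀ k, ∀ᶠ z in 𝓝[>] x, |θ z k - θs k| ≤ m x + (r / 2) * (z - x) := by
      intro k
      have hder : HasDerivAt (fun s => θ s k)
          (ω k + ∑ j, A k j * Real.sin (θ x j - θ x k)) x := hsol x hx k
      set d := ω k + ∑ j, A k j * Real.sin (θ x j - θ x k) with hd
      have hslope : Tendsto (slope (fun s => θ s k) x) (𝓝[>] x) (𝓝 d) :=
        (hasDerivAt_iff_tendsto_slope.1 hder).mono_left
          (nhdsWithin_mono _ (fun z hz => ne_of_gt hz))
      have hvalcont : ContinuousAt (fun z => θ z k - θs k) x :=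
        hder.continuousAt.sub continuousAt_const
      have habs : |θ x k - θs k| ≤ m x := hle x k
      rcases lt_or_eq_of_le habs with hlt | heqm
      · -- strictly below the max: continuity suffices
        have h2 : ∀ᶠ z in 𝓝 x, |θ z k - θs k| < m x :=
          (hvalcont.abs.eventually_lt continuousAt_const hlt)
        filter_upwards [h2.filter_mono nhdsWithin_le_nhds, self_mem_nhdsWithin] with z h1 h2'
        have hzx : x < z := h2'
        have : (0 : ℝ) ≤ (r / 2) * (z - x) := mul_nonneg (by linarith) (by linarith)
        linarith
      · by_cases hm0 : m x = 0
        · -- all coordinates coincide with the equilibrium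
          have hall0 : ∀ j, θ x j = θs j := by
            intro j
            have := hle x j
            rw [hm0] at this
            have := abs_nonpos_iff.1 (le_trans (le_refl _) this)
            linarith [sub_eq_zero.1 this]
          have hd0 : d = 0 := by
            rw [hd]
            have : ∀ j, θ x j - θ x k = θs j - θs k := by
              intro j; rw [hall0 j, hall0 k]
            simp only [this]
            exact heq k
          rw [hd0] at hslope
          have habsslope : Tendsto (fun z => |slope (fun s => θ s k) x z|) (𝓝[>] x) (𝓝 0) := by
            have := hslope.abs
            simpa using this
          have hev2 : ∀ᶠ z in 𝓝[>] x, |slope (fun s => θ s k) x z| < r / 2 :=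
            habsslope.eventually_lt_const (by linarith)
          filter_upwards [hev2, self_mem_nhdsWithin] with z h1 h2'
          have hxz : x < z := h2'
          have hval := hdisp k x z hxz
          have hxk : θ x k = θs k := hall0 k
          have : |θ z k - θs k| = |slope (fun s => θ s k) x z| * (z - x) := by
            rw [hval, hxk]
            rw [show θs k + slope (fun s => θ s k) x z * (z - x) - θs k
              = slope (fun s => θ s k) x z * (z - x) by ring]
            rw [abs_mul, abs_of_pos (by linarith : (0:ℝ) < z - x)]
          rw [this, hm0]
          nlinarith
        · have hmpos : 0 < m x := lt_of_le_of_ne (hm_nonneg x) (Ne.symm hm0)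
          rcases abs_cases (θ x k - θs k) with ⟨he, hpos⟩ | ⟨he, hneg⟩
          · -- at the positive max
            have hkmax : θ x k - θs k = m x := by rw [← he, heqm]
            have hd0 : d ≤ 0 := keymax x hx hmx.le k hkmax
            have hev2 : ∀ᶠ z in 𝓝[>] x, slope (fun s => θ s k) x z < r / 2 :=
              hslope.eventually_lt_const (by linarith)
            have hev3 : ∀ᶠ z in 𝓝[>] x, -(m x) < θ z k - θs k := by
              have : Tendsto (fun z => θ z k - θs k) (𝓝[>] x) (𝓝 (θ x k - θs k)) :=
                hvalcont.continuousWithinAt.tendsto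
            -- θ x k - θs k = m x > -(m x)
              exact this.eventually_const_lt (by rw [hkmax]; linarith)
            filter_upwards [hev2, hev3, self_mem_nhdsWithin] with z h1 h2 h3
            have hxz : x < z := h3
            have hval := hdisp k x z hxz
            have hub : θ z k - θs k ≤ m x + (r / 2) * (z - x) := by
              rw [hval]
              have : slope (fun s => θ s k) x z * (z - x) ≤ (r / 2) * (z - x) := by
                apply mul_le_mul_of_nonneg_right h1.le (by linarith)
              linarith [hkmax]
            have hlb : -(m x + (r / 2) * (z - x)) ≤ θ z k - θs k := by
              have : (0:ℝ) ≤ (r / 2) * (z - x) := mul_nonneg (by linarith) (by linarith)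
              linarith
            exact abs_le.2 ⟨hlb, hub⟩
          · -- at the negative max
            have hkmin : θ x k - θs k = -(m x) := by
              linarith [he, heqm]
            have hd0 : 0 ≤ d := keymin x hx hmx.le k hkmin
            have hev2 : ∀ᶠ z in 𝓝[>] x, -(r / 2) < slope (fun s => θ s k) x z :=
              hslope.eventually_const_lt (by linarith)
            have hev3 : ∀ᶠ z in 𝓝[>] x, θ z k - θs k < m x := by
              have : Tendsto (fun z => θ z k - θs k) (𝓝[>] x) (𝓝 (θ x k - θs k)) :=
                hvalcont.continuousWithinAt.tendsto
              exact this.eventually_lt_const (by rw [hkmin]; linarith)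
            filter_upwards [hev2, hev3, self_mem_nhdsWithin] with z h1 h2 h3
            have hxz : x < z := h3
            have hval := hdisp k x z hxz
            have hlb : -(m x + (r / 2) * (z - x)) ≤ θ z k - θs k := by
              rw [hval]
              have : -((r / 2)) * (z - x) ≤ slope (fun s => θ s k) x z * (z - x) := by
                apply mul_le_mul_of_nonneg_right h1.le (by linarith)
              nlinarith [hkmin]
            have hub : θ z k - θs k ≤ m x + (r / 2) * (z - x) := by
              have : (0:ℝ) ≤ (r / 2) * (z - x) := mul_nonneg (by linarith) (by linarith)
              linarith
            exact abs_le.2 ⟨hlb, hub⟩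
    filter_upwards [slope_bound x (r / 2) hev] with z hz
    linarith
  -- Gronwall-type estimate
  have gron : ∀ s, 0 ≤ s → m s < γ → ∀ T, s ≤ T → ∀ ε : ℝ, 0 < ε →
      ε * (T - s) < γ - m s → ∀ t ∈ Icc s T, m t ≤ m s + ε * (t - s) := by
    intro s hs hms T hsT ε hε hεT
    have key := image_le_of_liminf_slope_right_lt_deriv_boundary
      (f := m) (f' := fun x => if m x < γ then 0 else C0 + 1) (a := s) (b := T)
      (B := fun t => m s + ε * (t - s)) (B' := fun _ => ε)
      (fun t ht => (hcontm t (le_trans hs ht.1)).continuousWithinAt)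
      ?_ (by simp) ?_ ?_
    · exact fun t ht => key ht
    · -- the liminf slope condition
      intro x hx r hr
      have hx0 : 0 ≤ x := le_trans hs hx.1
      by_cases h : m x < γ
      · simp only [if_pos h] at hr
        exact (dini x hx0 h r hr).frequently
      · simp only [if_neg h] at hr
        have hev : ∀ k, ∀ᶠ z in 𝓝[>] x,
            |θ z k - θs k| ≤ m x + (C0 + 1 / 2) * (z - x) := by
          intro k
          have hder : HasDerivAt (fun s => θ s k)
              (ω k + ∑ j, A k j * Real.sin (θ x j - θ x k)) x := hsol x hx0 k
          set d := ω k + ∑ j, A k j * Real.sin (θ x j - θ x k) with hd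
          have hdb : |d| ≤ C0 := hC0 x hx0 k
          have hslope : Tendsto (slope (fun s => θ s k) x) (𝓝[>] x) (𝓝 d) :=
            (hasDerivAt_iff_tendsto_slope.1 hder).mono_left
              (nhdsWithin_mono _ (fun z hz => ne_of_gt hz))
          have habsslope : Tendsto (fun z => |slope (fun s => θ s k) x z|)
              (𝓝[>] x) (𝓝 |d|) := hslope.abs
          have hev2 : ∀ᶠ z in 𝓝[>] x, |slope (fun s => θ s k) x z| < C0 + 1 / 2 :=
            habsslope.eventually_lt_const (by linarith)
          filter_upwards [hev2, self_mem_nhdsWithin] with z h1 h2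
          have hxz : x < z := h2
          have hval := hdisp k x z hxz
          have : |θ z k - θs k| ≤ |θ x k - θs k|
              + |slope (fun s => θ s k) x z| * (z - x) := by
            rw [hval]
            calc |θ x k + slope (fun s => θ s k) x z * (z - x) - θs k|
                ≤ |θ x k - θs k| + |slope (fun s => θ s k) x z * (z - x)| := by
                  rw [show θ x k + slope (fun s => θ s k) x z * (z - x) - θs k
                    = (θ x k - θs k) + slope (fun s => θ s k) x z * (z - x) by ring]
                  exact abs_add_le _ _
              _ = |θ x k - θs k| + |slope (fun s => θ s k) x z| * (z - x) := by
                  rw [abs_mul, abs_of_pos (by linarith : (0:ℝ) < z - x)]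
          have h3 : |slope (fun s => θ s k) x z| * (z - x)
              ≤ (C0 + 1 / 2) * (z - x) :=
            mul_le_mul_of_nonneg_right h1.le (by linarith)
          linarith [hle x k]
        have := slope_bound x (C0 + 1 / 2) hev
        refine (this.mono ?_).frequently
        intro z hz
        linarith
    · -- derivative of the barrier
      intro x
      have : HasDerivAt (fun t => m s + ε * (t - s)) (ε * 1) x :=
        (((hasDerivAt_id x).sub_const s).const_mul ε).const_add (m s)
      simpa using this
    · -- boundary strictness
      intro x hx hfB
      have hBx : m x = m s + ε * (x - s) := hfB
      have hxT : x - s ≤ T - s := by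
        have := hx.2.le
        linarith
      have hmxγ : m x < γ := by
        rw [hBx]
        have : ε * (x - s) ≤ ε * (T - s) := mul_le_mul_of_nonneg_left hxT hε.le
        linarith
      show (if m x < γ then (0:ℝ) else C0 + 1) < ε
      rw [if_pos hmxγ]
      exact hε
  -- main monotonicity claim
  have Hmono : ∀ s, 0 ≤ s → m s < γ → ∀ t, s ≤ t → m t ≤ m s := by
    intro s hs hms t hst
    rcases eq_or_lt_of_le hst with rfl | hlt
    · exact le_refl _
    · refine le_of_forall_pos_lt_add fun η hη => ?_
      have hts : 0 < t - s := by linarith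
      set ε := min (η / (2 * (t - s))) ((γ - m s) / (2 * (t - s))) with hεdef
      have hε : 0 < ε := lt_min (by positivity) (by
        have : 0 < γ - m s := by linarith
        positivity)
      have hεT : ε * (t - s) < γ - m s := by
        have h1 : ε ≤ (γ - m s) / (2 * (t - s)) := min_le_right _ _
        have h2 : ε * (t - s) ≤ (γ - m s) / (2 * (t - s)) * (t - s) :=
          mul_le_mul_of_nonneg_right h1 hts.le
        have h3 : (γ - m s) / (2 * (t - s)) * (t - s) = (γ - m s) / 2 := by
          field_simp
        rw [h3] at h2
        linarith
      have hmt := gron s hs hms t hst ε hε hεT t ⟨hst, le_refl _⟩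
      have h1 : ε ≤ η / (2 * (t - s)) := min_le_left _ _
      have h2 : ε * (t - s) ≤ η / (2 * (t - s)) * (t - s) :=
        mul_le_mul_of_nonneg_right h1 hts.le
      have h3 : η / (2 * (t - s)) * (t - s) = η / 2 := by
        field_simp
      rw [h3] at h2
      linarith
  have hm0γ : m 0 < γ := by
    obtain ⟨k0, hk0⟩ := Finite.exists_max (fun k => |θ 0 k - θs k|)
    exact lt_of_le_of_lt (ciSup_le hk0) (hinit k0)
  constructor
  · intro a ha b hb hab
    have hma : m a < γ := lt_of_le_of_lt (Hmono 0 le_rfl hm0γ a ha) hm0γ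
    exact Hmono a ha hma b hab
  · intro t ht k
    exact lt_of_le_of_lt (hle t k)
      (lt_of_le_of_lt (Hmono 0 le_rfl hm0γ t ht) hm0γ)
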